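/- arXiv:1107.5598 — 3 statements merged into one kernel-verified Lean document; each statement's English description precedes it below -/
import Mathlib

section
/- Let F be a field of characteristic zero and let w, x, y, z ∈ F with x ≠ 0. Set y' = y/(2x), z' = z/x − (3/4)(y/x)², and w' = w + (1/2)(y/x)³ − (3/2)(y/x)(z/x). Then w'² + (z' − y'²)²·(z' + 2y'²) = (z³ + w·y³ + w²·x³ − 3w·x·y·z)/x³. -/
/-- The coordinate change of Section 2.2 of the paper: for `x ≠ 0` in a field of
characteristic zero, setting `y' = y/(2x)`, `z' = z/x − (3/4)(y/x)²`,
`w' = w + (1/2)(y/x)³ − (3/2)(y/x)(z/x)`, one has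
`w'² + (z' − y'²)²(z' + 2y'²) = (z³ + wy³ + w²x³ − 3wxyz)/x³`. -/
theorem cp3_coordinate_change {F : Type*} [Field F] [CharZero F]
    (w x y z : F) (hx : x ≠ 0) :
    (w + (1 / 2) * (y / x) ^ 3 - (3 / 2) * (y / x) * (z / x)) ^ 2 +
      (z / x - (3 / 4) * (y / x) ^ 2 - (y / (2 * x)) ^ 2) ^ 2 *
        (z / x - (3 / 4) * (y / x) ^ 2 + 2 * (y / (2 * x)) ^ 2) =
      (z ^ 3 + w * y ^ 3 + w ^ 2 * x ^ 3 - 3 * w * x * y * z) / x ^ 3 := by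
  have h1 : y / (2 * x) = y / x / 2 := by
    rw [div_div]; ring_nf
  have h2 : (z ^ 3 + w * y ^ 3 + w ^ 2 * x ^ 3 - 3 * w * x * y * z) / x ^ 3 =
      (z / x) ^ 3 + w * (y / x) ^ 3 + w ^ 2 - 3 * w * (y / x) * (z / x) := by
    field_simp
  rw [h1, h2]
  generalize y / x = a
  generalize z / x = b
  ring
end

section
/- Let k be a field, let R = k⟦w,x,y⟧ be the ring of formal power series in three variables w, x, y over k, let m = (w,x,y) be its maximal ideal and let I = (x,y) ⊆ R. For a nonzero G ∈ R, let ord G denote the largest integer n with G ∈ mⁿ and let ord_I G denote the largest integer n with G ∈ Iⁿ. Suppose G ∈ R is nonzero with ord G = ord_I G, and let θ ∈ R be a nonunit that divides G in R. Then θ ∈ I, i.e. θ lies in the ideal generated by x and y. -/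
set_option maxHeartbeats 1000000


open MvPowerSeries

namespace OrdGeomAux

variable {k : Type*} [Field k]

private lemma fin3_ext {e e' : Fin 3 →₀ ℕ} (h0 : e 0 = e' 0) (h1 : e 1 = e' 1)
    (h2 : e 2 = e' 2) : e = e' := by
  ext i
  fin_cases i <;> assumption

/-- coefficient-wise restriction of a power series to a set of exponents -/
noncomputable def part (f : MvPowerSeries (Fin 3) k) (p : (Fin 3 →₀ ℕ) → Prop) :
    MvPowerSeries (Fin 3) k :=
  open Classical in fun e => if p e then coeff e f else 0

open Classical in
lemma coeff_part (f : MvPowerSeries (Fin 3) k) (p : (Fin 3 →₀ ℕ) → Prop) (e : Fin 3 →₀ ℕ) :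
    coeff e (part f p) = if p e then coeff e f else 0 := rfl

lemma coeff_mul_low {f g : MvPowerSeries (Fin 3) k} {p q : ℕ}
    (hf : ∀ e : Fin 3 →₀ ℕ, e 1 + e 2 < p → coeff e f = 0)
    (hg : ∀ e : Fin 3 →₀ ℕ, e 1 + e 2 < q → coeff e g = 0)
    (e : Fin 3 →₀ ℕ) (he : e 1 + e 2 < p + q) : coeff e (f * g) = 0 := by
  rw [coeff_mul]
  refine Finset.sum_eq_zero fun ab hab => ?_
  rw [Finset.HasAntidiagonal.mem_antidiagonal] at hab
  have h1 : ab.1 1 + ab.2 1 = e 1 := by rw [← hab]; simp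
  have h2 : ab.1 2 + ab.2 2 = e 2 := by rw [← hab]; simp
  by_cases h : ab.1 1 + ab.1 2 < p
  · rw [hf _ h, zero_mul]
  · rw [hg _ (by omega), mul_zero]

lemma coeff_I_one {b : MvPowerSeries (Fin 3) k}
    (hb : b ∈ Ideal.span {(X 1 : MvPowerSeries (Fin 3) k), X 2}) :
    ∀ e : Fin 3 →₀ ℕ, e 1 + e 2 < 1 → coeff e b = 0 := by
  rw [Ideal.mem_span_pair] at hb
  obtain ⟨u, v, rfl⟩ := hb
  intro e he
  rw [map_add]
  have hx1 : coeff e (u * X 1) = 0 := by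
    rw [show (X 1 : MvPowerSeries (Fin 3) k) = monomial (Finsupp.single 1 1) 1 from rfl,
      coeff_mul_monomial, if_neg]
    rw [Finsupp.single_le_iff]
    omega
  have hx2 : coeff e (v * X 2) = 0 := by
    rw [show (X 2 : MvPowerSeries (Fin 3) k) = monomial (Finsupp.single 2 1) 1 from rfl,
      coeff_mul_monomial, if_neg]
    rw [Finsupp.single_le_iff]
    omega
  rw [hx1, hx2, add_zero]

lemma coeff_eq_zero_of_mem_I_pow {d : ℕ} {f : MvPowerSeries (Fin 3) k}
    (hf : f ∈ (Ideal.span {(X 1 : MvPowerSeries (Fin 3) k), X 2}) ^ d)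
    (e : Fin 3 →₀ ℕ) (he : e 1 + e 2 < d) : coeff e f = 0 := by
  induction d generalizing f e with
  | zero => omega
  | succ n ih =>
    rw [pow_succ] at hf
    refine Submodule.mul_induction_on hf (fun a ha b hb => ?_) (fun x y hx hy => ?_) e he
    · intro e he
      exact coeff_mul_low (fun e' he' => ih ha e' he') (coeff_I_one hb) e he
    · intro e he
      rw [map_add, hx e he, hy e he, add_zero]

lemma coord_single_add (s i : Fin 3) (e : Fin 3 →₀ ℕ) :
    (Finsupp.single s 1 + e : Fin 3 →₀ ℕ) i = (if s = i then 1 else 0) + e i := by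
  rw [Finsupp.add_apply, Finsupp.single_apply]

lemma coeff_X_mul' (s : Fin 3) (h : MvPowerSeries (Fin 3) k) (e : Fin 3 →₀ ℕ) :
    coeff e h = coeff (Finsupp.single s 1 + e) (X s * h) := by
  rw [show (X s : MvPowerSeries (Fin 3) k) = monomial (Finsupp.single s 1) 1 from rfl,
    coeff_add_monomial_mul, one_mul]

lemma mem_m_pow_of_coeff {n : ℕ} {f : MvPowerSeries (Fin 3) k}
    (hf : ∀ e : Fin 3 →₀ ℕ, e 0 + e 1 + e 2 < n → coeff e f = 0) :
    f ∈ (Ideal.span {(X 0 : MvPowerSeries (Fin 3) k), X 1, X 2}) ^ n := by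
  classical
  induction n generalizing f with
  | zero => simpa using Submodule.mem_top
  | succ n ih =>
    set M : Ideal (MvPowerSeries (Fin 3) k) :=
      Ideal.span {(X 0 : MvPowerSeries (Fin 3) k), X 1, X 2} with hM
    set g0 := part f (fun e => e 0 ≠ 0) with hg0
    set g1 := part f (fun e => e 0 = 0 ∧ e 1 ≠ 0) with hg1
    set g2 := part f (fun e => e 0 = 0 ∧ e 1 = 0) with hg2
    have hsplit : f = g0 + g1 + g2 := by
      apply MvPowerSeries.ext
      intro e
      rw [map_add, map_add, hg0, hg1, hg2, coeff_part, coeff_part, coeff_part]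
      by_cases h0 : e 0 = 0 <;> by_cases h1 : e 1 = 0 <;> simp [h0, h1]
    obtain ⟨c0, hc0⟩ : (X 0 : MvPowerSeries (Fin 3) k) ∣ g0 := by
      rw [X_dvd_iff]
      intro e he
      rw [hg0, coeff_part, if_neg]
      simp [he]
    obtain ⟨c1, hc1⟩ : (X 1 : MvPowerSeries (Fin 3) k) ∣ g1 := by
      rw [X_dvd_iff]
      intro e he
      rw [hg1, coeff_part, if_neg]
      simp [he]
    obtain ⟨c2, hc2⟩ : (X 2 : MvPowerSeries (Fin 3) k) ∣ g2 := by
      rw [X_dvd_iff]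
      intro e he
      rw [hg2, coeff_part]
      split
      · next h => exact hf e (by omega)
      · rfl
    have hmemX : ∀ s : Fin 3, (X s : MvPowerSeries (Fin 3) k) ∈ M := by
      intro s
      apply Ideal.subset_span
      fin_cases s <;> simp <;> omega
    have hdegs : ∀ (s : Fin 3) (e : Fin 3 →₀ ℕ),
        (Finsupp.single s 1 + e : Fin 3 →₀ ℕ) 0 + (Finsupp.single s 1 + e : Fin 3 →₀ ℕ) 1
          + (Finsupp.single s 1 + e : Fin 3 →₀ ℕ) 2 = e 0 + e 1 + e 2 + 1 := by
      intro s e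
      rw [coord_single_add, coord_single_add, coord_single_add]
      fin_cases s <;> simp <;> omega
    have key : ∀ (s : Fin 3) (g c : MvPowerSeries (Fin 3) k), g = X s * c →
        (∀ e : Fin 3 →₀ ℕ, e 0 + e 1 + e 2 < n + 1 → coeff e g = 0) →
        ∀ e : Fin 3 →₀ ℕ, e 0 + e 1 + e 2 < n → coeff e c = 0 := by
      intro s g c hgc hgl e he
      rw [coeff_X_mul' s c e, ← hgc]
      exact hgl _ (by rw [hdegs]; omega)
    have hgl0 : ∀ e : Fin 3 →₀ ℕ, e 0 + e 1 + e 2 < n + 1 → coeff e g0 = 0 := by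
      intro e he
      rw [hg0, coeff_part]
      split
      · exact hf e he
      · rfl
    have hgl1 : ∀ e : Fin 3 →₀ ℕ, e 0 + e 1 + e 2 < n + 1 → coeff e g1 = 0 := by
      intro e he
      rw [hg1, coeff_part]
      split
      · exact hf e he
      · rfl
    have hgl2 : ∀ e : Fin 3 →₀ ℕ, e 0 + e 1 + e 2 < n + 1 → coeff e g2 = 0 := by
      intro e he
      rw [hg2, coeff_part]
      split
      · exact hf e he
      · rfl
    have hc0m : c0 ∈ M ^ n := ih (key 0 g0 c0 hc0 hgl0)
    have hc1m : c1 ∈ M ^ n := ih (key 1 g1 c1 hc1 hgl1)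
    have hc2m : c2 ∈ M ^ n := ih (key 2 g2 c2 hc2 hgl2)
    rw [hsplit, hc0, hc1, hc2, pow_succ']
    exact add_mem (add_mem (Ideal.mul_mem_mul (hmemX 0) hc0m)
      (Ideal.mul_mem_mul (hmemX 1) hc1m)) (Ideal.mul_mem_mul (hmemX 2) hc2m)

lemma mem_I_of_coeff {f : MvPowerSeries (Fin 3) k}
    (hf : ∀ e : Fin 3 →₀ ℕ, e 1 = 0 → e 2 = 0 → coeff e f = 0) :
    f ∈ Ideal.span {(X 1 : MvPowerSeries (Fin 3) k), X 2} := by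
  classical
  set g1 := part f (fun e => e 1 ≠ 0) with hg1
  set g2 := part f (fun e => e 1 = 0) with hg2
  have hsplit : f = g1 + g2 := by
    apply MvPowerSeries.ext
    intro e
    rw [map_add, hg1, hg2, coeff_part, coeff_part]
    by_cases h : e 1 = 0 <;> simp [h]
  obtain ⟨c1, hc1⟩ : (X 1 : MvPowerSeries (Fin 3) k) ∣ g1 := by
    rw [X_dvd_iff]
    intro e he
    rw [hg1, coeff_part, if_neg]
    simp [he]
  obtain ⟨c2, hc2⟩ : (X 2 : MvPowerSeries (Fin 3) k) ∣ g2 := by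
    rw [X_dvd_iff]
    intro e he
    rw [hg2, coeff_part]
    split
    · next h => exact hf e h he
    · rfl
  have hX1 : (X 1 : MvPowerSeries (Fin 3) k) ∈
      Ideal.span {(X 1 : MvPowerSeries (Fin 3) k), X 2} := Ideal.subset_span (by simp)
  have hX2 : (X 2 : MvPowerSeries (Fin 3) k) ∈
      Ideal.span {(X 1 : MvPowerSeries (Fin 3) k), X 2} := Ideal.subset_span (by simp)
  rw [hsplit, hc1, hc2]
  exact add_mem (Ideal.mul_mem_right _ _ hX1) (Ideal.mul_mem_right _ _ hX2)

lemma exists_min {f : MvPowerSeries (Fin 3) k} (hf : f ≠ 0) :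
    ∃ ef : Fin 3 →₀ ℕ, coeff ef f ≠ 0 ∧
      ∀ e : Fin 3 →₀ ℕ, coeff e f ≠ 0 →
        ef 1 + ef 2 ≤ e 1 + e 2 ∧
        (e 1 + e 2 = ef 1 + ef 2 → ef 0 ≤ e 0 ∧ (e 0 = ef 0 → ef 1 ≤ e 1)) := by
  have h0 : ∃ e : Fin 3 →₀ ℕ, coeff e f ≠ 0 := by
    by_contra h
    push_neg at h
    exact hf (MvPowerSeries.ext fun e => by rw [h e, map_zero])
  obtain ⟨e₀, he₀⟩ := h0
  set A := {n : ℕ | ∃ e : Fin 3 →₀ ℕ, coeff e f ≠ 0 ∧ e 1 + e 2 = n} with hA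
  have hAne : A.Nonempty := ⟨e₀ 1 + e₀ 2, e₀, he₀, rfl⟩
  obtain ⟨ea, hea, heaw⟩ := Nat.sInf_mem hAne
  set B := {n : ℕ | ∃ e : Fin 3 →₀ ℕ, coeff e f ≠ 0 ∧ e 1 + e 2 = sInf A ∧ e 0 = n} with hB
  have hBne : B.Nonempty := ⟨ea 0, ea, hea, heaw, rfl⟩
  obtain ⟨eb, heb, hebw, heb0⟩ := Nat.sInf_mem hBne
  set C := {n : ℕ | ∃ e : Fin 3 →₀ ℕ, coeff e f ≠ 0 ∧ e 1 + e 2 = sInf A ∧ e 0 = sInf B ∧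
      e 1 = n} with hC
  have hCne : C.Nonempty := ⟨eb 1, eb, heb, hebw, heb0, rfl⟩
  obtain ⟨ef, hef, hefw, hef0, hef1⟩ := Nat.sInf_mem hCne
  refine ⟨ef, hef, fun e he => ?_⟩
  have m1 : sInf A ≤ e 1 + e 2 := Nat.sInf_le ⟨e, he, rfl⟩
  refine ⟨by omega, fun h1 => ?_⟩
  have m2 : sInf B ≤ e 0 := Nat.sInf_le ⟨e, he, by omega, rfl⟩
  refine ⟨by omega, fun h2 => ?_⟩
  have m3 : sInf C ≤ e 1 := Nat.sInf_le ⟨e, he, by omega, by omega, rfl⟩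
  omega

lemma coeff_mul_min {f g : MvPowerSeries (Fin 3) k} {ef eg : Fin 3 →₀ ℕ}
    (hef : coeff ef f ≠ 0) (heg : coeff eg g ≠ 0)
    (hfmin : ∀ e : Fin 3 →₀ ℕ, coeff e f ≠ 0 →
        ef 1 + ef 2 ≤ e 1 + e 2 ∧
        (e 1 + e 2 = ef 1 + ef 2 → ef 0 ≤ e 0 ∧ (e 0 = ef 0 → ef 1 ≤ e 1)))
    (hgmin : ∀ e : Fin 3 →₀ ℕ, coeff e g ≠ 0 →
        eg 1 + eg 2 ≤ e 1 + e 2 ∧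
        (e 1 + e 2 = eg 1 + eg 2 → eg 0 ≤ e 0 ∧ (e 0 = eg 0 → eg 1 ≤ e 1))) :
    coeff (ef + eg) (f * g) ≠ 0 := by
  have hz : ∀ p : (Fin 3 →₀ ℕ) × (Fin 3 →₀ ℕ), p ∈ Finset.HasAntidiagonal.antidiagonal (ef + eg) →
      p ≠ (ef, eg) → coeff p.1 f * coeff p.2 g = 0 := by
    rintro ⟨a, b⟩ hab hne
    rw [Finset.HasAntidiagonal.mem_antidiagonal] at hab
    by_cases ha : coeff a f = 0
    · rw [ha, zero_mul]
    by_cases hb : coeff b g = 0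
    · rw [hb, mul_zero]
    exfalso
    apply hne
    have s0 : a 0 + b 0 = ef 0 + eg 0 := by
      have := congrArg (fun x : Fin 3 →₀ ℕ => x 0) hab
      simpa using this
    have s1 : a 1 + b 1 = ef 1 + eg 1 := by
      have := congrArg (fun x : Fin 3 →₀ ℕ => x 1) hab
      simpa using this
    have s2 : a 2 + b 2 = ef 2 + eg 2 := by
      have := congrArg (fun x : Fin 3 →₀ ℕ => x 2) hab
      simpa using this
    have Ha1 := (hfmin a ha).1
    have Hb1 := (hgmin b hb).1
    have wa : a 1 + a 2 = ef 1 + ef 2 := by omega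
    have wb : b 1 + b 2 = eg 1 + eg 2 := by omega
    have Ha2 := (hfmin a ha).2 wa
    have Hb2 := (hgmin b hb).2 wb
    have a0 : a 0 = ef 0 := by omega
    have b0 : b 0 = eg 0 := by omega
    have Ha3 := Ha2.2 a0
    have Hb3 := Hb2.2 b0
    have haef : a = ef := fin3_ext (by omega) (by omega) (by omega)
    have hbeg : b = eg := fin3_ext (by omega) (by omega) (by omega)
    rw [haef, hbeg]
  rw [coeff_mul, Finset.sum_eq_single_of_mem (ef, eg) (Finset.HasAntidiagonal.mem_antidiagonal.mpr rfl) hz]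
  exact mul_ne_zero hef heg

end OrdGeomAux

open OrdGeomAux in
/-- Lemma 3.7 (lem:ordgeom) of the paper.  In `R = k⟦w,x,y⟧` (variables indexed
by `Fin 3` with `w = X 0`, `x = X 1`, `y = X 2`), let `m = (w,x,y)` and
`I = (x,y)`.  If `G ≠ 0` has the same order `d` with respect to `m` and to `I`
(i.e. `G ∈ mᵈ \ mᵈ⁺¹` and `G ∈ Iᵈ \ Iᵈ⁺¹`), then every nonunit divisor `θ`
of `G` lies in `I`. -/
theorem nonunit_divisor_mem_of_ord_eq_ordI {k : Type*} [Field k]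
    (m I : Ideal (MvPowerSeries (Fin 3) k))
    (hm : m = Ideal.span {(X 0 : MvPowerSeries (Fin 3) k), X 1, X 2})
    (hI : I = Ideal.span {(X 1 : MvPowerSeries (Fin 3) k), X 2})
    (G : MvPowerSeries (Fin 3) k) (hG : G ≠ 0) (d : ℕ)
    (hGm : G ∈ m ^ d) (hGm' : G ∉ m ^ (d + 1))
    (hGI : G ∈ I ^ d) (hGI' : G ∉ I ^ (d + 1))
    (θ : MvPowerSeries (Fin 3) k) (hθ : ¬ IsUnit θ) (hdvd : θ ∣ G) :
    θ ∈ I := by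
  subst hm hI
  obtain ⟨ψ, rfl⟩ := hdvd
  have hθ0 : θ ≠ 0 := by rintro rfl; rw [zero_mul] at hG; exact hG rfl
  have hψ0 : ψ ≠ 0 := by rintro rfl; rw [mul_zero] at hG; exact hG rfl
  have hcc : coeff (0 : Fin 3 →₀ ℕ) θ = 0 := by
    by_contra h
    rw [coeff_zero_eq_constantCoeff_apply] at h
    exact hθ (isUnit_iff_constantCoeff.mpr (isUnit_iff_ne_zero.mpr h))
  by_contra hnI
  have hex : ¬ ∀ e : Fin 3 →₀ ℕ, e 1 = 0 → e 2 = 0 → coeff e θ = 0 :=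
    fun h => hnI (mem_I_of_coeff h)
  push_neg at hex
  obtain ⟨e₁, he₁1, he₁2, he₁⟩ := hex
  obtain ⟨ef, hef, hfmin⟩ := exists_min hθ0
  obtain ⟨eg, heg, hgmin⟩ := exists_min hψ0
  have hefI : ef 1 + ef 2 = 0 := by
    have := (hfmin e₁ he₁).1
    omega
  have hprod := coeff_mul_min hef heg hfmin hgmin
  have h1 : ¬ (ef + eg) 1 + (ef + eg) 2 < d :=
    fun h => hprod (coeff_eq_zero_of_mem_I_pow hGI _ h)
  have hq : d ≤ eg 1 + eg 2 := by
    simp only [Finsupp.add_apply] at h1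
    omega
  have hex2 : ¬ ∀ e : Fin 3 →₀ ℕ, e 0 + e 1 + e 2 < d + 1 → coeff e (θ * ψ) = 0 :=
    fun h => hGm' (mem_m_pow_of_coeff h)
  push_neg at hex2
  obtain ⟨e₀, he₀d, he₀⟩ := hex2
  rw [coeff_mul] at he₀
  obtain ⟨⟨a, b⟩, habmem, habne⟩ := Finset.exists_ne_zero_of_sum_ne_zero he₀
  rw [Finset.HasAntidiagonal.mem_antidiagonal] at habmem
  have ha : coeff a θ ≠ 0 := left_ne_zero_of_mul habne
  have hb : coeff b ψ ≠ 0 := right_ne_zero_of_mul habne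
  have ha0 : a ≠ 0 := fun h => ha (h ▸ hcc)
  have hbI : d ≤ b 1 + b 2 := le_trans hq ((hgmin b hb).1)
  have s0 : a 0 + b 0 = e₀ 0 := by
    have := congrArg (fun x : Fin 3 →₀ ℕ => x 0) habmem
    simpa using this
  have s1 : a 1 + b 1 = e₀ 1 := by
    have := congrArg (fun x : Fin 3 →₀ ℕ => x 1) habmem
    simpa using this
  have s2 : a 2 + b 2 = e₀ 2 := by
    have := congrArg (fun x : Fin 3 →₀ ℕ => x 2) habmem
    simpa using this
  have haa : 1 ≤ a 0 + a 1 + a 2 := by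
    by_contra h
    push_neg at h
    apply ha0
    apply fin3_ext (e' := 0) <;> simp <;> omega
  omega
end

section
/- Let k be a field of characteristic zero and let k⟦v,x,y⟧ denote the ring of formal power series in v, x, y over k. The polynomial z² + (v² + y)·y² ∈ k⟦v,x,y⟧[z] is irreducible over the fraction field of k⟦v,x,y⟧; consequently, the monic cubic f = (z + x)(z² + (w + y)y²) over k⟦w,x,y⟧ does not split into three monic linear factors over k⟦v,x,y⟧ after the coefficient substitution w ↦ v². -/
instance MvPowerSeries.instIsDomainOfField {K : Type*} [Field K] (σ : Type*) :
    IsDomain (MvPowerSeries σ K) :=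
  NoZeroDivisors.to_isDomain _

/-- `φ` is the ring homomorphism `k⟦w,x,y⟧ → k⟦v,x,y⟧` sending `w ↦ vⁿ`,
`x ↦ x`, `y ↦ y`, characterized on coefficients. -/
def IsSubstPow {k : Type*} [CommSemiring k] (n : ℕ)
    (φ : MvPowerSeries (Fin 3) k →+* MvPowerSeries (Fin 3) k) : Prop :=
  ∀ (f : MvPowerSeries (Fin 3) k) (d : Fin 3 →₀ ℕ),
    MvPowerSeries.coeff d (φ f) =
      if n ∣ d 0 then MvPowerSeries.coeff (Finsupp.update d 0 (d 0 / n)) f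
      else 0

namespace RemarkExampleAux

open MvPowerSeries

variable {k : Type*} [Field k]

local notation "R3" => MvPowerSeries (Fin 3) k

private lemma lexOrder_eq_of {φ : R3} {d : Fin 3 →₀ ℕ}
    (h0 : MvPowerSeries.coeff d φ ≠ 0)
    (h1 : ∀ e : Fin 3 →₀ ℕ, toLex e < toLex d → MvPowerSeries.coeff e φ = 0) :
    lexOrder φ = ((toLex d : Lex (Fin 3 →₀ ℕ)) : WithTop (Lex (Fin 3 →₀ ℕ))) := by
  refine le_antisymm (lexOrder_le_of_coeff_ne_zero h0) ?_
  exact le_lexOrder_iff.mpr (fun e he => h1 e (by exact_mod_cast he))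

private lemma lexOrder_X2 :
    lexOrder (X 2 : R3) = ((toLex (Finsupp.single (2 : Fin 3) 1) :
      Lex (Fin 3 →₀ ℕ)) : WithTop (Lex (Fin 3 →₀ ℕ))) := by
  classical
  apply lexOrder_eq_of
  · rw [MvPowerSeries.coeff_X, if_pos rfl]; exact one_ne_zero
  · intro e he
    rw [MvPowerSeries.coeff_X, if_neg (fun h => absurd (congrArg toLex h) (ne_of_lt he))]

private lemma not_lt_single02 :
    ¬ (toLex (Finsupp.single (0 : Fin 3) 2) < toLex (Finsupp.single (2 : Fin 3) 1)) := by
  intro h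
  obtain ⟨j, hj, hlt⟩ := Finsupp.lex_def.mp h
  fin_cases j
  · simp [Finsupp.single_apply] at hlt
  · simp [Finsupp.single_apply] at hlt
  · have := hj 0 (by decide)
    simp [Finsupp.single_apply] at this

private lemma lexOrder_p :
    lexOrder ((X 0) ^ 2 + X 2 : R3) = ((toLex (Finsupp.single (2 : Fin 3) 1) :
      Lex (Fin 3 →₀ ℕ)) : WithTop (Lex (Fin 3 →₀ ℕ))) := by
  classical
  have hne : (Finsupp.single (2 : Fin 3) 1) ≠ (Finsupp.single (0 : Fin 3) 2) := by
    intro h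
    have := DFunLike.congr_fun h (0 : Fin 3)
    simp [Finsupp.single_apply] at this
  apply lexOrder_eq_of
  · rw [map_add, MvPowerSeries.X_pow_eq, MvPowerSeries.coeff_monomial,
      MvPowerSeries.coeff_X, if_neg hne, if_pos rfl]
    simp
  · intro e he
    rw [map_add, MvPowerSeries.X_pow_eq, MvPowerSeries.coeff_monomial,
      MvPowerSeries.coeff_X, if_neg, if_neg, add_zero]
    · exact fun h => absurd (congrArg toLex h) (ne_of_lt he)
    · rintro rfl; exact not_lt_single02 he

private lemma lexOrder_neg (φ : R3) : lexOrder (-φ) = lexOrder φ := by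
  have key : ∀ ψ : R3, lexOrder ψ ≤ lexOrder (-ψ) := by
    intro ψ
    rw [le_lexOrder_iff]
    intro d hd
    rw [map_neg, coeff_eq_zero_of_lt_lexOrder hd, neg_zero]
  refine le_antisymm ?_ (key φ)
  simpa using key (-φ)

private lemma X2_ne_zero : (X 2 : R3) ≠ 0 := by
  intro h0
  have := lexOrder_X2 (k := k)
  rw [h0, lexOrder_zero] at this
  simp at this

private lemma p_ne_zero : ((X 0) ^ 2 + X 2 : R3) ≠ 0 := by
  intro h0
  have := lexOrder_p (k := k)
  rw [h0, lexOrder_zero] at this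
  simp at this

/-- Core fact: `a² = -((v²+y)·y²)·b²` forces `b = 0` in `k⟦v,x,y⟧`, by comparing
the parity of the `y`-exponent of the lexicographic valuations of both sides. -/
private lemma no_sqrt (a b : R3)
    (h : a * a = -(((X 0) ^ 2 + X 2) * (X 2) ^ 2 * (b * b))) : b = 0 := by
  classical
  by_contra hb
  have h' : a * a = -(((X 0) ^ 2 + X 2) * (X 2 * X 2) * (b * b)) := by
    rw [h]; ring
  have ha : a ≠ 0 := by
    intro h0
    rw [h0, zero_mul, eq_comm, neg_eq_zero] at h'
    exact (mul_ne_zero (mul_ne_zero p_ne_zero (mul_ne_zero X2_ne_zero X2_ne_zero))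
      (mul_ne_zero hb hb)) h'
  obtain ⟨la, hla⟩ := exists_finsupp_eq_lexOrder_of_ne_zero ha
  obtain ⟨lb, hlb⟩ := exists_finsupp_eq_lexOrder_of_ne_zero hb
  have horder := congrArg lexOrder h'
  rw [lexOrder_mul, lexOrder_neg, lexOrder_mul, lexOrder_mul, lexOrder_mul, lexOrder_mul,
    lexOrder_p, lexOrder_X2, hla, hlb] at horder
  rw [← WithTop.coe_add, ← WithTop.coe_add, ← WithTop.coe_add, ← WithTop.coe_add,
    ← WithTop.coe_add, WithTop.coe_inj] at horder
  have heq : la + la = Finsupp.single (2 : Fin 3) 1 + (Finsupp.single (2 : Fin 3) 1 +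
      Finsupp.single (2 : Fin 3) 1) + (lb + lb) := by
    apply toLex.injective
    simpa [toLex_add] using horder
  have h2 := DFunLike.congr_fun heq (2 : Fin 3)
  simp [Finsupp.single_apply] at h2
  omega

/-- The quadratic `z² + (v² + y)·y²` is irreducible over `Frac k⟦v,x,y⟧`. -/
private lemma irred :
    Irreducible (Polynomial.X ^ 2 + Polynomial.C
        (algebraMap R3 (FractionRing R3)
          (((X 0) ^ 2 + X 2) * (X 2) ^ 2))) := by
  classical
  set q : R3 := ((X 0) ^ 2 + X 2) * (X 2) ^ 2 with hq
  set c : FractionRing R3 := algebraMap R3 (FractionRing R3) q with hc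
  have hmonic : (Polynomial.X ^ 2 + Polynomial.C c).Monic :=
    Polynomial.monic_X_pow_add_C c two_ne_zero
  rw [hmonic.irreducible_iff_roots_eq_zero_of_degree_le_three
    (by rw [Polynomial.natDegree_X_pow_add_C]) (by rw [Polynomial.natDegree_X_pow_add_C]; omega)]
  rw [Multiset.eq_zero_iff_forall_notMem]
  intro r hr
  rw [Polynomial.mem_roots hmonic.ne_zero, Polynomial.IsRoot.def] at hr
  have hr' : r ^ 2 + c = 0 := by
    simpa only [Polynomial.eval_add, Polynomial.eval_pow, Polynomial.eval_X,
      Polynomial.eval_C] using hr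
  have hr2 : r * r = -c := by linear_combination hr'
  obtain ⟨⟨n, dd⟩, hnd⟩ := IsLocalization.surj (nonZeroDivisors R3) r
  simp only at hnd
  have hd0 : (dd : R3) ≠ 0 := nonZeroDivisors.ne_zero dd.2
  have hcd : c = algebraMap R3 (FractionRing R3) ((X 0) ^ 2 + X 2) *
      algebraMap R3 (FractionRing R3) ((X 2) ^ 2) := by
    rw [hc, hq, map_mul]
  have key : algebraMap R3 (FractionRing R3) (n * n) =
      algebraMap R3 (FractionRing R3) (-(q * ((dd : R3) * (dd : R3)))) := by
    rw [map_mul, ← hnd, map_neg, map_mul, map_mul, map_mul]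
    linear_combination (algebraMap R3 (FractionRing R3) (dd : R3)) ^ 2 * hr2 -
      (algebraMap R3 (FractionRing R3) (dd : R3)) ^ 2 * hcd
  have key2 : n * n = -(((X 0) ^ 2 + X 2) * (X 2) ^ 2 * ((dd : R3) * (dd : R3))) := by
    have h := IsFractionRing.injective R3 (FractionRing R3) key
    exact h.trans (by rw [hq])
  exact hd0 (no_sqrt n dd key2)

private lemma upd_apply0 (d : Fin 3 →₀ ℕ) (n : ℕ) : (d.update 0 n) 0 = n := by
  simp [Finsupp.coe_update]

private lemma upd_applyj (d : Fin 3 →₀ ℕ) (n : ℕ) {j : Fin 3} (hj : j ≠ 0) :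
    (d.update 0 n) j = d j := by
  simp [Finsupp.coe_update, Function.update_apply, hj]

private lemma upd_self_of (d : Fin 3 →₀ ℕ) {n : ℕ} (h : n = d 0) : d.update 0 n = d := by
  rw [h]; exact Finsupp.update_self d 0

private lemma single_apply0 (i : Fin 3) (hi : i ≠ 0) (m : ℕ) :
    (Finsupp.single i m : Fin 3 →₀ ℕ) 0 = 0 := by
  simp [Finsupp.single_apply, hi]

private lemma phi_X_ne0 {φ₂ : R3 →+* R3} (h2 : IsSubstPow 2 φ₂) (i : Fin 3) (hi : i ≠ 0) :
    φ₂ (X i) = X i := by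
  classical
  apply MvPowerSeries.ext
  intro d
  rw [h2 (X i) d]
  by_cases hdvd : 2 ∣ d 0
  · rw [if_pos hdvd, MvPowerSeries.coeff_X, MvPowerSeries.coeff_X]
    refine if_congr ?_ rfl rfl
    constructor
    · intro h
      have h0 : d 0 / 2 = 0 := by
        have := DFunLike.congr_fun h (0 : Fin 3)
        rwa [upd_apply0, single_apply0 i hi] at this
      have hd0 : (0 : ℕ) = d 0 := by omega
      have := upd_self_of d (show d 0 / 2 = d 0 by omega)
      exact this.symm.trans h
    · rintro rfl
      have h0 := single_apply0 i hi 1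
      exact upd_self_of _ (by omega)
  · rw [if_neg hdvd, MvPowerSeries.coeff_X, if_neg]
    rintro rfl
    exact hdvd (by rw [single_apply0 i hi]; exact dvd_zero 2)
  
private lemma phi_X0 {φ₂ : R3 →+* R3} (h2 : IsSubstPow 2 φ₂) :
    φ₂ (X 0) = (X 0) ^ 2 := by
  classical
  apply MvPowerSeries.ext
  intro d
  rw [h2 (X 0) d, MvPowerSeries.X_pow_eq, MvPowerSeries.coeff_monomial]
  by_cases hdvd : 2 ∣ d 0
  · rw [if_pos hdvd, MvPowerSeries.coeff_X]
    refine if_congr ?_ rfl rfl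
    constructor
    · intro h
      have h0 : d 0 / 2 = 1 := by
        have := DFunLike.congr_fun h (0 : Fin 3)
        rwa [upd_apply0, Finsupp.single_eq_same] at this
      ext j
      by_cases hj : j = 0
      · subst hj
        rw [Finsupp.single_eq_same]
        omega
      · have := DFunLike.congr_fun h j
        rw [upd_applyj d _ hj] at this
        rw [this, Finsupp.single_apply, Finsupp.single_apply, if_neg (Ne.symm hj),
          if_neg (Ne.symm hj)]
    · rintro rfl
      ext j
      by_cases hj : j = 0
      · subst hj
        rw [upd_apply0, Finsupp.single_eq_same, Finsupp.single_eq_same]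
      · rw [upd_applyj _ _ hj, Finsupp.single_apply, Finsupp.single_apply,
          if_neg (Ne.symm hj), if_neg (Ne.symm hj)]
  · rw [if_neg hdvd, if_neg]
    rintro rfl
    exact hdvd (by rw [Finsupp.single_eq_same])

end RemarkExampleAux

set_option maxHeartbeats 1000000 in
set_option synthInstance.maxHeartbeats 400000 in
open RemarkExampleAux in
/-- The example of Remark 1.11(2) of the paper: `z² + (v² + y)y²` is irreducible
over `Frac k⟦v,x,y⟧`, and consequently the cubic `f = (z + x)(z² + (w + y)y²)`
over `k⟦w,x,y⟧` does not split into three monic linear factors after the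
substitution `w ↦ v²`.  Variables: `w = X 0` (resp. `v = X 0`), `x = X 1`,
`y = X 2`. -/
theorem remark_example_not_split_after_v2 {k : Type*} [Field k] [CharZero k]
    (φ₂ : MvPowerSeries (Fin 3) k →+* MvPowerSeries (Fin 3) k)
    (h2 : IsSubstPow 2 φ₂) :
    Irreducible (Polynomial.X ^ 2 + Polynomial.C
        (algebraMap (MvPowerSeries (Fin 3) k)
          (FractionRing (MvPowerSeries (Fin 3) k))
          (((MvPowerSeries.X 0) ^ 2 + MvPowerSeries.X 2) * (MvPowerSeries.X 2) ^ 2))) ∧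
      ¬ ∃ a b c : MvPowerSeries (Fin 3) k,
        Polynomial.map φ₂
            ((Polynomial.X + Polynomial.C (MvPowerSeries.X 1)) *
              (Polynomial.X ^ 2 + Polynomial.C
                ((MvPowerSeries.X 0 + MvPowerSeries.X 2) * (MvPowerSeries.X 2) ^ 2))) =
          (Polynomial.X + Polynomial.C a) * (Polynomial.X + Polynomial.C b) *
            (Polynomial.X + Polynomial.C c) := by
  classical
  refine ⟨irred, ?_⟩
  rintro ⟨aa, bb, cc, hf⟩
  have hsub : φ₂ ((MvPowerSeries.X 0 + MvPowerSeries.X 2) * (MvPowerSeries.X 2) ^ 2) =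
      ((MvPowerSeries.X 0) ^ 2 + MvPowerSeries.X 2) * (MvPowerSeries.X 2) ^ 2 := by
    rw [map_mul, map_add, map_pow, phi_X0 h2, phi_X_ne0 h2 2 (by decide)]
  rw [Polynomial.map_mul, Polynomial.map_add, Polynomial.map_add, Polynomial.map_pow,
    Polynomial.map_X, Polynomial.map_C, Polynomial.map_C, hsub,
    phi_X_ne0 h2 1 (by decide)] at hf
  have hf' := congrArg (Polynomial.map
    (algebraMap (MvPowerSeries (Fin 3) k) (FractionRing (MvPowerSeries (Fin 3) k)))) hf
  simp only [Polynomial.map_mul, Polynomial.map_add, Polynomial.map_pow,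
    Polynomial.map_X, Polynomial.map_C] at hf'
  set F := algebraMap (MvPowerSeries (Fin 3) k) (FractionRing (MvPowerSeries (Fin 3) k)) with hF
  set Q : Polynomial (FractionRing (MvPowerSeries (Fin 3) k)) :=
    Polynomial.X ^ 2 + Polynomial.C
      (F (((MvPowerSeries.X 0) ^ 2 + MvPowerSeries.X 2) * (MvPowerSeries.X 2) ^ 2)) with hQ
  have hirr : Irreducible Q := irred
  have hprime : Prime Q := hirr.prime
  have hdvd : Q ∣ (Polynomial.X + Polynomial.C (F aa)) * (Polynomial.X + Polynomial.C (F bb)) *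
      (Polynomial.X + Polynomial.C (F cc)) := by
    rw [← hf']
    exact Dvd.intro_left _ rfl
  have habs : ∀ t : FractionRing (MvPowerSeries (Fin 3) k),
      ¬ Q ∣ (Polynomial.X + Polynomial.C t) := by
    intro t ht
    have hle := Polynomial.degree_le_of_dvd ht (Polynomial.X_add_C_ne_zero t)
    rw [hQ, Polynomial.degree_X_pow_add_C (by norm_num), Polynomial.degree_X_add_C] at hle
    norm_num at hle
  rcases hprime.2.2 _ _ hdvd with h | h
  · rcases hprime.2.2 _ _ h with h' | h'
    · exact habs _ h'
    · exact habs _ h'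
  · exact habs _ h
end
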